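/- Let G = (V,E) be a finite undirected multigraph, A, B ⊆ V², e ∈ E, and let φ be a fourientation of G \ e. Let c ∈ {←e, →e} be a 1-way configuration of e such that φ ∪ c is (A,B)-valid. If the arc c is cyclic in the digraph D(c), then φ ∪ ↔e is (A,B)-valid; if the arc c is acyclic in D(c), then φ ∪ ↑e is (A,B)-valid. -/

import Mathlib

namespace SubgraphsVsOrientations

/-- The four possible configurations of an edge in a fourientation:
`zero` = 0-way, `forward`/`backward` = the two 1-way configurations (relative to
a reference direction of the edge), `two` = 2-way. -/
inductive Four : Type
  | zero | forward | backward | two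
deriving DecidableEq

instance : Fintype Four where
  elems := {Four.zero, Four.forward, Four.backward, Four.two}
  complete := by intro x; cases x <;> simp

variable {V E : Type*}

/-- Whether configuration `c` allows traversal of the edge in direction `b`
(`b = true` means from `src` to `tgt`). -/
def allows : Four → Bool → Prop
  | Four.zero, _ => False
  | Four.forward, b => b = true
  | Four.backward, b => b = false
  | Four.two, _ => True

/-- An edge configuration is solid if it is 0-way or 2-way. -/
def IsSolid (c : Four) : Prop := c = Four.zero ∨ c = Four.two

/-- A configuration is 1-way if it is `forward` or `backward`. -/
def IsOneWay (c : Four) : Prop := c = Four.forward ∨ c = Four.backward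

/-- Reversing a configuration: swaps the two 1-way configurations,
fixes 0-way and 2-way. -/
def flipFour : Four → Four
  | Four.forward => Four.backward
  | Four.backward => Four.forward
  | c => c

/-- The 1-way configuration corresponding to direction `b`. -/
def oneWayFour (b : Bool) : Four := if b then Four.forward else Four.backward

/-- Tail of the arc `(e, b)` (the edge `e` traversed in direction `b`). -/
def arcTail (src tgt : E → V) (a : E × Bool) : V := if a.2 then src a.1 else tgt a.1

/-- Head of the arc `(e, b)`. -/
def arcHead (src tgt : E → V) (a : E × Bool) : V := if a.2 then tgt a.1 else src a.1

/-- One-step relation of the digraph `G⃗(A,B;φ)`: there is an arc from `x` to `y`, either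
a traversable directed edge of the fourientation `φ`, or an extra arc from `A ∪ B`. -/
def arcStep (src tgt : E → V) (A B : Set (V × V)) (φ : E → Four) (x y : V) : Prop :=
  (∃ a : E × Bool, allows (φ a.1) a.2 ∧ arcTail src tgt a = x ∧ arcHead src tgt a = y)
    ∨ (x, y) ∈ A ∪ B

/-- Reachability by a directed path in the digraph `G⃗(A,B;φ)`. -/
def reach (src tgt : E → V) (A B : Set (V × V)) (φ : E → Four) : V → V → Prop :=
  Relation.ReflTransGen (arcStep src tgt A B φ)

/-- A fourientation `φ` is `(A,B)`-valid: in `G⃗(A,B;φ)`, for every `(u,v) ∈ A` the vertex `v`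
cannot reach `u`, and for every `(u,v) ∈ B` the vertex `v` can reach `u`. -/
def IsValid (src tgt : E → V) (A B : Set (V × V)) (φ : E → Four) : Prop :=
  (∀ p ∈ A, ¬ reach src tgt A B φ p.2 p.1) ∧ (∀ p ∈ B, reach src tgt A B φ p.2 p.1)

/-- The set of solid edges of a fourientation. -/
def solidSet (φ : E → Four) : Set E := {e | IsSolid (φ e)}

/-- The fourientation associated to an orientation `σ : E → Bool` (every edge 1-way). -/
def toFour (σ : E → Bool) : E → Four := fun e => oneWayFour (σ e)

open Classical in
/-- The fourientation associated to a (spanning) subgraph `F ⊆ E`: edges of `F` are 2-way,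
the other edges are 0-way. -/
noncomputable def toFourSub (F : Set E) : E → Four :=
  fun e => if e ∈ F then Four.two else Four.zero

/-- The arc `(e,b)` is the arc of a 1-way edge of `φ`. -/
def oneWayArc (φ : E → Four) (a : E × Bool) : Prop := φ a.1 = oneWayFour a.2

/-- `Cyc(φ)`: the set of cyclic 1-way edges (arcs) of the fourientation `φ`, in the digraph
`G⃗(A,B;φ)`: the head of the arc can reach its tail. -/
def CycSet (src tgt : E → V) (A B : Set (V × V)) (φ : E → Four) : Set (E × Bool) :=
  {a | oneWayArc φ a ∧ reach src tgt A B φ (arcHead src tgt a) (arcTail src tgt a)}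

/-- `Acy(φ)`: the set of acyclic 1-way edges (arcs) of the fourientation `φ`. -/
def AcySet (src tgt : E → V) (A B : Set (V × V)) (φ : E → Four) : Set (E × Bool) :=
  {a | oneWayArc φ a ∧ ¬ reach src tgt A B φ (arcHead src tgt a) (arcTail src tgt a)}

/-- `l` is (the arc sequence of) a directed cycle: a nonempty closed chain of arcs
visiting no vertex twice. -/
def IsDirCycle (src tgt : E → V) (l : List (E × Bool)) : Prop :=
  ∃ h : l ≠ [],
    l.Chain' (fun a b => arcHead src tgt a = arcTail src tgt b) ∧
    arcHead src tgt (l.getLast h) = arcTail src tgt (l.head h) ∧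
    (l.map (arcTail src tgt)).Nodup

/-- Reversing the directed cycle `l` in the fourientation `φ`: all 1-way edges on the cycle are
reversed, other edges (in particular 2-way edges of the cycle) are unchanged. -/
def revCyc [DecidableEq E] (φ : E → Four) (l : List (E × Bool)) : E → Four :=
  fun e => if (e, true) ∈ l ∨ (e, false) ∈ l then flipFour (φ e) else φ e

/-- One cycle-reversal move: `ψ` is obtained from `φ` by reversing a directed cycle of `φ`. -/
def CycleStep (src tgt : E → V) [DecidableEq E] (φ ψ : E → Four) : Prop :=
  ∃ l, IsDirCycle src tgt l ∧ (∀ a ∈ l, allows (φ a.1) a.2) ∧ ψ = revCyc φ l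

/-- The edge `e` crosses the cut given by `V1` (in either direction). -/
def edgeCrosses (src tgt : E → V) (V1 : Set V) (e : E) : Prop :=
  (src e ∈ V1 ∧ tgt e ∉ V1) ∨ (tgt e ∈ V1 ∧ src e ∉ V1)

/-- The cut `V1 / V1ᶜ` defines a directed `(A,B)`-cocycle of `G⃗(A,B;φ)`: the set of arcs from
`V1` to `V1ᶜ` is nonempty, no arc of the digraph goes from `V1ᶜ` to `V1`, and no arc of
`A ∪ B` crosses the cut (in either direction). -/
def IsABCocycleCut (src tgt : E → V) (A B : Set (V × V)) (φ : E → Four) (V1 : Set V) : Prop :=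
  (∃ a : E × Bool, allows (φ a.1) a.2 ∧ arcTail src tgt a ∈ V1 ∧ arcHead src tgt a ∉ V1) ∧
  (∀ a : E × Bool, allows (φ a.1) a.2 → ¬ (arcTail src tgt a ∉ V1 ∧ arcHead src tgt a ∈ V1)) ∧
  (∀ p ∈ A ∪ B, ((p : V × V).1 ∈ V1 ↔ p.2 ∈ V1))

open Classical in
/-- Reversing the directed cocycle given by the cut `V1`: all 1-way edges crossing the cut are
reversed, other edges (in particular 0-way edges crossing the cut) are unchanged. -/
noncomputable def revCut (src tgt : E → V) (φ : E → Four) (V1 : Set V) : E → Four :=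
  fun e => if edgeCrosses src tgt V1 e then flipFour (φ e) else φ e

/-- One cocycle-reversal move: `ψ` is obtained from `φ` by reversing a directed
`(A,B)`-cocycle of `φ`. -/
def CocycleStep (src tgt : E → V) (A B : Set (V × V)) (φ ψ : E → Four) : Prop :=
  ∃ V1 : Set V, IsABCocycleCut src tgt A B φ V1 ∧ ψ = revCut src tgt φ V1

/-- One cycle- or cocycle-reversal move. -/
def CCStep (src tgt : E → V) (A B : Set (V × V)) [DecidableEq E] (φ ψ : E → Four) : Prop :=
  CycleStep src tgt φ ψ ∨ CocycleStep src tgt A B φ ψ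

/-- `φ` contains no cycle (of the graph `G`) made entirely of 2-way edges. -/
def NoTwoWayCycle (src tgt : E → V) (φ : E → Four) : Prop :=
  ¬ ∃ l : List (E × Bool), IsDirCycle src tgt l ∧ (l.map Prod.fst).Nodup ∧
      ∀ a ∈ l, φ a.1 = Four.two

/-- `φ` contains no `(A,B)`-cocycle (of the graph `G`) made entirely of 0-way edges:
there is no cut, not crossed by any arc of `A ∪ B`, crossed by at least one edge of `G`,
all of whose crossing edges are 0-way. -/
def NoZeroWayCocycle (src tgt : E → V) (A B : Set (V × V)) (φ : E → Four) : Prop :=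
  ¬ ∃ V1 : Set V, (∃ e, edgeCrosses src tgt V1 e) ∧
      (∀ e, edgeCrosses src tgt V1 e → φ e = Four.zero) ∧
      (∀ p ∈ A ∪ B, ((p : V × V).1 ∈ V1 ↔ p.2 ∈ V1))

/-- The subgraph `F` contains no cycle (it is a forest). -/
def NoCycleIn (src tgt : E → V) (F : Set E) : Prop :=
  ¬ ∃ l : List (E × Bool), IsDirCycle src tgt l ∧ (l.map Prod.fst).Nodup ∧ ∀ a ∈ l, a.1 ∈ F

/-- One undirected adjacency step in the graph `F ∪ A̲ ∪ B̲`. -/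
def usym (src tgt : E → V) (A B : Set (V × V)) (F : Set E) (x y : V) : Prop :=
  (∃ e ∈ F, (src e = x ∧ tgt e = y) ∨ (src e = y ∧ tgt e = x)) ∨
  (∃ p ∈ A ∪ B, ((p : V × V) = (x, y) ∨ p = (y, x)))

/-- Connectivity (by undirected paths) in the graph `F ∪ A̲ ∪ B̲`. -/
def ureach (src tgt : E → V) (A B : Set (V × V)) (F : Set E) : V → V → Prop :=
  Relation.ReflTransGen (usym src tgt A B F)

/-- The subgraph `F` is `(A,B)`-connected: the connected components of `F ∪ A̲ ∪ B̲`
coincide with those of `G ∪ A̲ ∪ B̲`. -/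
def ABConnected (src tgt : E → V) (A B : Set (V × V)) (F : Set E) : Prop :=
  ∀ x y, ureach src tgt A B F x y ↔ ureach src tgt A B Set.univ x y


section Aux

variable {V E : Type*}

lemma reach_mono' (src tgt : E → V) (A B : Set (V × V)) {φ ψ : E → Four}
    (h : ∀ a : E × Bool, allows (φ a.1) a.2 → allows (ψ a.1) a.2) :
    ∀ x y, reach src tgt A B φ x y → reach src tgt A B ψ x y := by
  intro x y
  apply Relation.ReflTransGen.mono
  rintro u v (⟨a, ha, ht, hh⟩ | hab)
  · exact Or.inl ⟨a, h a ha, ht, hh⟩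
  · exact Or.inr hab

lemma allows_oneWay_self (b : Bool) : allows (oneWayFour b) b := by
  cases b <;> simp [oneWayFour, allows]

lemma allows_oneWay_iff (b c : Bool) : allows (oneWayFour b) c ↔ c = b := by
  cases b <;> cases c <;> simp [oneWayFour, allows]

lemma arcTail_neg (src tgt : E → V) (e : E) (b : Bool) :
    arcTail src tgt (e, !b) = arcHead src tgt (e, b) := by
  cases b <;> simp [arcTail, arcHead]

lemma arcHead_neg (src tgt : E → V) (e : E) (b : Bool) :
    arcHead src tgt (e, !b) = arcTail src tgt (e, b) := by
  cases b <;> simp [arcTail, arcHead]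

lemma reach_two_to_one [DecidableEq E] (src tgt : E → V) (A B : Set (V × V))
    (e : E) (φ : E → Four) (b : Bool)
    (hc : reach src tgt A B (Function.update φ e (oneWayFour b))
      (arcHead src tgt (e, b)) (arcTail src tgt (e, b))) :
    ∀ x y, reach src tgt A B (Function.update φ e Four.two) x y →
      reach src tgt A B (Function.update φ e (oneWayFour b)) x y := by
  have step : ∀ u v, arcStep src tgt A B (Function.update φ e Four.two) u v →
      reach src tgt A B (Function.update φ e (oneWayFour b)) u v := by
    rintro u v (⟨⟨a1, a2⟩, ha, ht, hh⟩ | hab)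
    · by_cases hea : a1 = e
      · subst hea
        by_cases hab2 : a2 = b
        · subst hab2
          refine Relation.ReflTransGen.single (Or.inl ⟨(a1, a2), ?_, ht, hh⟩)
          rw [Function.update_self]
          exact allows_oneWay_self a2
        · have hab2' : a2 = !b := by cases a2 <;> cases b <;> simp_all
          subst hab2'
          rw [arcTail_neg] at ht
          rw [arcHead_neg] at hh
          rw [← ht, ← hh]
          exact hc
      · refine Relation.ReflTransGen.single (Or.inl ⟨(a1, a2), ?_, ht, hh⟩)
        rwa [Function.update_of_ne hea] at ha ⊢
    · exact Relation.ReflTransGen.single (Or.inr hab)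
  intro x y h
  induction h with
  | refl => exact Relation.ReflTransGen.refl
  | tail _ h2 ih => exact ih.trans (step _ _ h2)

lemma reach_one_decomp [DecidableEq E] (src tgt : E → V) (A B : Set (V × V))
    (e : E) (φ : E → Four) (b : Bool) :
    ∀ x y, reach src tgt A B (Function.update φ e (oneWayFour b)) x y →
      reach src tgt A B (Function.update φ e Four.zero) x y ∨
      (reach src tgt A B (Function.update φ e Four.zero) x (arcTail src tgt (e, b)) ∧
        reach src tgt A B (Function.update φ e (oneWayFour b)) (arcHead src tgt (e, b)) y) := by
  intro x y h
  induction h using Relation.ReflTransGen.head_induction_on with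
  | refl => exact Or.inl Relation.ReflTransGen.refl
  | head hs hr ih =>
    rename_i u m
    rcases hs with ⟨a, ha, ht, hh⟩ | hab
    · by_cases hea : a.1 = e
      · rw [hea, Function.update_self, allows_oneWay_iff] at ha
        have haeq : a = (e, b) := by obtain ⟨a1, a2⟩ := a; simp_all
        subst haeq
        right
        refine ⟨?_, ?_⟩
        · rw [← ht]; exact Relation.ReflTransGen.refl
        · rw [← hh] at hr; exact hr
      · have ha0 : allows ((Function.update φ e Four.zero) a.1) a.2 := by
          rwa [Function.update_of_ne hea] at ha ⊢
        have hstep : arcStep src tgt A B (Function.update φ e Four.zero) u m :=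
          Or.inl ⟨a, ha0, ht, hh⟩
        rcases ih with h1 | ⟨h1, h2⟩
        · exact Or.inl (Relation.ReflTransGen.head hstep h1)
        · exact Or.inr ⟨Relation.ReflTransGen.head hstep h1, h2⟩
    · have hstep : arcStep src tgt A B (Function.update φ e Four.zero) u m := Or.inr hab
      rcases ih with h1 | ⟨h1, h2⟩
      · exact Or.inl (Relation.ReflTransGen.head hstep h1)
      · exact Or.inr ⟨Relation.ReflTransGen.head hstep h1, h2⟩

end Aux

/-- Let `φ` be a fourientation of `G \ e` and let `c` be a 1-way
configuration of `e` (direction `b`) such that `φ ∪ c` is `(A,B)`-valid. If the arc `c` is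
cyclic in `D(c)` then `φ ∪ ↔e` is `(A,B)`-valid; if the arc `c` is acyclic in `D(c)` then
`φ ∪ ↑e` is `(A,B)`-valid. -/
theorem statement7 {V E : Type*} [Fintype V] [Fintype E] [DecidableEq E] (src tgt : E → V)
    (A B : Set (V × V)) (e : E) (φ : E → Four) (b : Bool)
    (hvalid : IsValid src tgt A B (Function.update φ e (oneWayFour b))) :
    (reach src tgt A B (Function.update φ e (oneWayFour b))
        (arcHead src tgt (e, b)) (arcTail src tgt (e, b)) →
      IsValid src tgt A B (Function.update φ e Four.two)) ∧
    (¬ reach src tgt A B (Function.update φ e (oneWayFour b))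
        (arcHead src tgt (e, b)) (arcTail src tgt (e, b)) →
      IsValid src tgt A B (Function.update φ e Four.zero)) := by

  constructor
  · intro hcyc
    constructor
    · intro p hp hr
      exact hvalid.1 p hp (reach_two_to_one src tgt A B e φ b hcyc _ _ hr)
    · intro p hp
      refine reach_mono' src tgt A B ?_ _ _ (hvalid.2 p hp)
      intro a ha
      by_cases hea : a.1 = e
      · rw [hea, Function.update_self]; trivial
      · rwa [Function.update_of_ne hea] at ha ⊢
  · intro hacyc
    have mono0 : ∀ x y, reach src tgt A B (Function.update φ e Four.zero) x y →
        reach src tgt A B (Function.update φ e (oneWayFour b)) x y := by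
      refine reach_mono' src tgt A B ?_
      intro a ha
      by_cases hea : a.1 = e
      · rw [hea, Function.update_self] at ha; exact ha.elim
      · rwa [Function.update_of_ne hea] at ha ⊢
    constructor
    · intro p hp hr
      exact hvalid.1 p hp (mono0 _ _ hr)
    · intro p hp
      rcases reach_one_decomp src tgt A B e φ b _ _ (hvalid.2 p hp) with h1 | ⟨h1, h2⟩
      · exact h1
      · exfalso
        apply hacyc
        refine h2.trans (Relation.ReflTransGen.head (Or.inr ?_) (mono0 _ _ h1))
        exact Set.mem_union_right A hp

end SubgraphsVsOrientations
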